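/- Let q, d, q', d' ∈ [0, 1] and define f(α) = (q·(e^α − 1) + 1)/(d·(e^α − 1) + 1) and f'(α) = (q'·(e^α − 1) + 1)/(d'·(e^α − 1) + 1). If (q·d' − q'·d, q + d' − q' − d) ≠ (0, 0), then the set { α : ℝ | α > 0 ∧ f(α) = f'(α) } contains at most one element. -/

import Mathlib

/-- Two such linear-fractional functions of `e^α − 1` agree at most once on
`(0, ∞)` unless `(q·d' − q'·d, q + d' − q' − d) = (0, 0)`. -/
theorem stmt_8 (q d q' d' : ℝ)
    (hq : q ∈ Set.Icc (0 : ℝ) 1) (hd : d ∈ Set.Icc (0 : ℝ) 1)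
    (hq' : q' ∈ Set.Icc (0 : ℝ) 1) (hd' : d' ∈ Set.Icc (0 : ℝ) 1)
    (h : ¬(q * d' - q' * d = 0 ∧ q + d' - q' - d = 0)) :
    Set.Subsingleton {α : ℝ | 0 < α ∧
      (q * (Real.exp α - 1) + 1) / (d * (Real.exp α - 1) + 1) =
      (q' * (Real.exp α - 1) + 1) / (d' * (Real.exp α - 1) + 1)} := by
  have key : ∀ α : ℝ, (0 < α ∧
      (q * (Real.exp α - 1) + 1) / (d * (Real.exp α - 1) + 1) =
      (q' * (Real.exp α - 1) + 1) / (d' * (Real.exp α - 1) + 1)) →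
      (q * d' - q' * d) * (Real.exp α - 1) + (q + d' - q' - d) = 0 := by
    rintro α ⟨hα, heq⟩
    set u := Real.exp α - 1 with hu
    have hupos : 0 < u := by
      simp only [hu, sub_pos]
      nlinarith [Real.add_one_le_exp α]
    have hden : 0 < d * u + 1 := by nlinarith [hd.1, hd.2]
    have hden' : 0 < d' * u + 1 := by nlinarith [hd'.1, hd'.2]
    have hcross : (q * u + 1) * (d' * u + 1) = (q' * u + 1) * (d * u + 1) := by
      field_simp at heq
      rw [div_eq_div_iff (ne_of_gt (by nlinarith)) (ne_of_gt (by nlinarith))] at heq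
      linarith [heq]
    have : u * ((q * d' - q' * d) * u + (q + d' - q' - d)) = 0 := by nlinarith [hcross]
    rcases mul_eq_zero.mp this with h1 | h1
    · linarith
    · linarith
  intro a ha b hb
  have ka := key a ha
  have kb := key b hb
  have hA : q * d' - q' * d ≠ 0 := by
    intro hA0
    apply h
    refine ⟨hA0, ?_⟩
    rw [hA0] at ka
    linarith
  have : Real.exp a = Real.exp b := by
    have : (q * d' - q' * d) * (Real.exp a - 1) = (q * d' - q' * d) * (Real.exp b - 1) := by
      linarith
    have := mul_left_cancel₀ hA this
    linarith
  exact Real.exp_injective this
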